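/- Assumptions and notation as in the Section 4 construction: (W,S) is an irreducible Coxeter system of finite rank with m_{st} < ∞ for all s,t ∈ S, whose Coxeter graph G is not a tree, with fixed s_1, s_2 ∈ S such that m := m_{s_1s_2} ≥ 4; p : G′ → G is the universal covering with fixed edge {s_1′, s_2′} over {s_1, s_2}, and V = ⊕_{a∈S′} ℂ α_a is the resulting representation of W. Let V_0 := {v ∈ V : s·v = v for all s ∈ S}, and assume (after possibly exchanging s_1 and s_2) that S_1′ := {a ∈ S′ : d(a,s_1′) < d(a,s_2′)} is infinite, where d is the distance in the tree G′. If m > 4, then the quotient representation V̄ := V / V_0 of W is irreducible and of infinite dimension. -/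

import Mathlib

/-- The Coxeter graph of a Coxeter matrix `M`: two distinct vertices `s, t` are adjacent iff
`M s t ≥ 3` or `M s t = ∞` (encoded as `0` in Mathlib), i.e. iff `M s t ≠ 2`. -/
def coxeterGraph {B : Type*} (M : CoxeterMatrix B) : SimpleGraph B where
  Adj s t := s ≠ t ∧ M s t ≠ 2
  symm := by
    constructor
    intro s t h
    exact ⟨h.1.symm, by rw [M.symmetric]; exact h.2⟩
  loopless := by constructor; intro s h; exact h.1 rfl

open Finsupp Classical in
/-- The Section 4 operators: for each `s ∈ S`, a linear operator on `V = ⊕_{a ∈ S′} ℂ α_a`,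
where `S′` is the vertex set of the universal covering `p : G′ → G` of the Coxeter graph `G`,
and `α_a = Finsupp.single a 1`.  Here `{s₁′, s₂′}` is the fixed edge of `G′` over the edge
`{s₁, s₂}` of `G` (with `m = m_{s₁s₂} ≥ 4`).  The defining formulas are:
(i) if `p a = s` then `s·α_a = −α_a`;
(ii) `s₁·α_{s₂′} = α_{s₂′} + 2cos(2π/m) α_{s₁′}` and `s₂·α_{s₁′} = α_{s₁′} + 2cos(2π/m) α_{s₂′}`;
(iii) otherwise, if `s` is not adjacent to `p a` in `G` (equivalently, under the covering
hypotheses, `a` has no neighbour in `G′` lying over `s`), then `s·α_a = α_a`;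
(iv) otherwise `s·α_a = α_a + 2cos(π/m_{s,p(a)}) α_b`, where `b` is the unique neighbour of `a`
in `G′` with `p b = s`. -/
noncomputable def sec4Act {B B' : Type*} (M : CoxeterMatrix B) (G' : SimpleGraph B')
    (p : B' → B) (s₁ s₂ : B) (s₁' s₂' : B') (s : B) : (B' →₀ ℂ) →ₗ[ℂ] (B' →₀ ℂ) :=
  Finsupp.lift _ ℂ _ fun a =>
    if p a = s then -single a 1
    else if s = s₁ ∧ a = s₂' then
      single s₂' 1 + (2 * Real.cos (2 * Real.pi / (M s₁ s₂ : ℝ)) : ℂ) • single s₁' 1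
    else if s = s₂ ∧ a = s₁' then
      single s₁' 1 + (2 * Real.cos (2 * Real.pi / (M s₁ s₂ : ℝ)) : ℂ) • single s₂' 1
    else if h : ∃ b, G'.Adj a b ∧ p b = s then
      single a 1 + (2 * Real.cos (Real.pi / (M s (p a) : ℝ)) : ℂ) • single h.choose 1
    else single a 1

/-- The subspace of vectors fixed by all the operators `σ s`. -/
def fixedSubmodule {B V : Type*} [AddCommGroup V] [Module ℂ V]
    (σ : B → V →ₗ[ℂ] V) : Submodule ℂ V where
  carrier := {v | ∀ s, σ s v = v}
  add_mem' := by
    intro a b ha hb s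
    simp [map_add, ha s, hb s]
  zero_mem' := by intro s; simp
  smul_mem' := by
    intro c a ha s
    simp [map_smul, ha s]

section Aux
open Finsupp
variable {B B' : Type*} (M : CoxeterMatrix B) (G' : SimpleGraph B') (p : B' → B)
  (s₁ s₂ : B) (s₁' s₂' : B')

lemma cos_pos_aux {k : ℕ} (hk : 3 ≤ k) : 0 < Real.cos (Real.pi / k) := by
  have hk0 : (0:ℝ) < k := by exact_mod_cast Nat.lt_of_lt_of_le (by norm_num) hk
  have hk3 : (3:ℝ) ≤ k := by exact_mod_cast hk
  apply Real.cos_pos_of_mem_Ioo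
  constructor
  · have : 0 < Real.pi / k := by positivity
    linarith [Real.pi_pos]
  · rw [div_lt_div_iff₀ hk0 (by norm_num : (0:ℝ) < 2)]
    nlinarith [Real.pi_pos]

lemma cos2_pos_aux {m : ℕ} (hm : 4 < m) : 0 < Real.cos (2 * Real.pi / m) := by
  have hm0 : (0:ℝ) < m := by exact_mod_cast Nat.lt_of_lt_of_le (by norm_num) hm
  have hm5 : (5:ℝ) ≤ m := by exact_mod_cast hm
  apply Real.cos_pos_of_mem_Ioo
  constructor
  · have : 0 < 2 * Real.pi / m := by positivity
    linarith [Real.pi_pos]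
  · rw [div_lt_div_iff₀ hm0 (by norm_num : (0:ℝ) < 2)]
    nlinarith [Real.pi_pos]

lemma cos_lt_aux {m : ℕ} (hm : 4 < m) :
    Real.cos (2 * Real.pi / m) < Real.cos (Real.pi / m) := by
  have hm0 : (0:ℝ) < m := by exact_mod_cast Nat.lt_of_lt_of_le (by norm_num) hm
  have hm5 : (5:ℝ) ≤ m := by exact_mod_cast hm
  apply Real.cos_lt_cos_of_nonneg_of_le_pi
  · positivity
  · rw [div_le_iff₀ hm0]
    nlinarith [Real.pi_pos]
  · rw [div_lt_div_iff₀ hm0 hm0]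
    nlinarith [Real.pi_pos]


open Classical in
lemma single_formula (s a) :
    sec4Act M G' p s₁ s₂ s₁' s₂' s (single a (1:ℂ)) =
      if p a = s then -single a 1
      else if s = s₁ ∧ a = s₂' then
        single s₂' 1 + (2 * Real.cos (2 * Real.pi / (M s₁ s₂ : ℝ)) : ℂ) • single s₁' 1
      else if s = s₂ ∧ a = s₁' then
        single s₁' 1 + (2 * Real.cos (2 * Real.pi / (M s₁ s₂ : ℝ)) : ℂ) • single s₂' 1
      else if h : ∃ b, G'.Adj a b ∧ p b = s then
        single a 1 + (2 * Real.cos (Real.pi / (M s (p a) : ℝ)) : ℂ) • single h.choose 1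
      else single a 1 := by
  rw [sec4Act, Finsupp.lift_apply, Finsupp.sum_single_index (by simp), one_smul]

lemma act_single_of_fiber (s : B) (a : B') (h : p a = s) :
    sec4Act M G' p s₁ s₂ s₁' s₂' s (single a (1:ℂ)) = -single a 1 := by
  rw [single_formula, if_pos h]

lemma act_single_s₂' (h : p s₂' ≠ s₁) :
    sec4Act M G' p s₁ s₂ s₁' s₂' s₁ (single s₂' (1:ℂ)) =
      single s₂' 1 + (2 * Real.cos (2 * Real.pi / (M s₁ s₂ : ℝ)) : ℂ) • single s₁' 1 := by
  rw [single_formula, if_neg h, if_pos ⟨rfl, rfl⟩]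

lemma act_single_s₁' (h : p s₁' ≠ s₂) (h12 : s₂ ≠ s₁) :
    sec4Act M G' p s₁ s₂ s₁' s₂' s₂ (single s₁' (1:ℂ)) =
      single s₁' 1 + (2 * Real.cos (2 * Real.pi / (M s₁ s₂ : ℝ)) : ℂ) • single s₂' 1 := by
  rw [single_formula, if_neg h, if_neg (fun hc => h12 hc.1), if_pos ⟨rfl, rfl⟩]

lemma act_single_adj (s : B) (a b : B') (h1 : p a ≠ s) (h2 : ¬(s = s₁ ∧ a = s₂'))
    (h3 : ¬(s = s₂ ∧ a = s₁')) (hadj : G'.Adj a b) (hpb : p b = s)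
    (huniq : ∀ c, G'.Adj a c → p c = s → c = b) :
    sec4Act M G' p s₁ s₂ s₁' s₂' s (single a (1:ℂ)) =
      single a 1 + (2 * Real.cos (Real.pi / (M s (p a) : ℝ)) : ℂ) • single b 1 := by
  have hex : ∃ c, G'.Adj a c ∧ p c = s := ⟨b, hadj, hpb⟩
  rw [single_formula, if_neg h1, if_neg h2, if_neg h3, dif_pos hex,
    huniq _ hex.choose_spec.1 hex.choose_spec.2]

lemma eval_sum {V : Type*} [AddCommGroup V] [Module ℂ V]
    (L : (B' →₀ ℂ) →ₗ[ℂ] V) (v : B' →₀ ℂ) :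
    L v = v.sum fun x c => c • L (single x 1) := by
  conv_lhs => rw [← Finsupp.sum_single v]
  rw [map_finsuppSum]
  refine Finsupp.sum_congr fun x _ => ?_
  rw [show (single x (v x) : B' →₀ ℂ) = v x • single x 1 by
    rw [Finsupp.smul_single, smul_eq_mul, mul_one], map_smul]

lemma eval_coord (L : (B' →₀ ℂ) →ₗ[ℂ] (B' →₀ ℂ)) (v : B' →₀ ℂ) (y : B') :
    (L v) y = v.sum fun x c => c * (L (single x 1)) y := by
  calc (L v) y = ((Finsupp.lapply y).comp L) v := rfl
    _ = v.sum fun x c => c • ((Finsupp.lapply y).comp L) (single x 1) := eval_sum _ _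
    _ = v.sum fun x c => c * (L (single x 1)) y := rfl

lemma coord (hp₁ : p s₁' = s₁) (hp₂ : p s₂' = s₂) (s : B) (x y : B') (hy : p y ≠ s) :
    (sec4Act M G' p s₁ s₂ s₁' s₂' s (single x (1:ℂ))) y = (single x (1:ℂ)) y := by
  rw [single_formula]
  split_ifs with h1 h2 h3 h4
  · have hxy : x ≠ y := fun hc => hy (hc ▸ h1)
    simp [Finsupp.single_eq_of_ne' hxy]
  · obtain ⟨rfl, rfl⟩ := h2
    have hy1 : s₁' ≠ y := fun hc => hy (hc ▸ hp₁)
    simp [Finsupp.single_eq_of_ne' hy1]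
  · obtain ⟨rfl, rfl⟩ := h3
    have hy2 : s₂' ≠ y := fun hc => hy (hc ▸ hp₂)
    simp [Finsupp.single_eq_of_ne' hy2]
  · have hyc : h4.choose ≠ y := fun hc => hy (hc ▸ h4.choose_spec.2)
    simp [Finsupp.single_eq_of_ne' hyc]
  · rfl

lemma coord_zero (hp₁ : p s₁' = s₁) (hp₂ : p s₂' = s₂) (hedge : G'.Adj s₁' s₂')
    (x y : B') (hxy : p x ≠ p y) (hnadj : ¬ G'.Adj x y) :
    (sec4Act M G' p s₁ s₂ s₁' s₂' (p y) (single x (1:ℂ))) y = 0 := by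
  have hxny : x ≠ y := fun hc => hxy (hc ▸ rfl)
  rw [single_formula]
  split_ifs with h1 h2 h3 h4
  · exact absurd h1 hxy
  · obtain ⟨hs, rfl⟩ := h2
    have hy1 : s₁' ≠ y := fun hc => hnadj (hc ▸ hedge.symm)
    simp [Finsupp.single_eq_of_ne' hxny, Finsupp.single_eq_of_ne' hy1]
  · obtain ⟨hs, rfl⟩ := h3
    have hy2 : s₂' ≠ y := fun hc => hnadj (hc ▸ hedge)
    simp [Finsupp.single_eq_of_ne' hxny, Finsupp.single_eq_of_ne' hy2]
  · have hyc : h4.choose ≠ y := fun hc => hnadj (hc ▸ h4.choose_spec.1)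
    simp [Finsupp.single_eq_of_ne' hxny, Finsupp.single_eq_of_ne' hyc]
  · simp [Finsupp.single_eq_of_ne' hxny]

lemma two_cos_ne_zero {k : ℕ} (hk : 3 ≤ k) :
    (2 * Real.cos (Real.pi / (k : ℝ)) : ℂ) ≠ 0 := by
  have h : (0:ℝ) < 2 * Real.cos (Real.pi / k) := by
    have := cos_pos_aux hk; linarith
  intro hc
  have : (2 * Real.cos (Real.pi / (k:ℝ)) : ℝ) = 0 := by exact_mod_cast hc
  linarith

lemma two_cos2_ne_zero {k : ℕ} (hk : 4 < k) :
    (2 * Real.cos (2 * Real.pi / (k : ℝ)) : ℂ) ≠ 0 := by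
  have h : (0:ℝ) < 2 * Real.cos (2 * Real.pi / k) := by
    have := cos2_pos_aux hk; linarith
  intro hc
  have : (2 * Real.cos (2 * Real.pi / (k:ℝ)) : ℝ) = 0 := by exact_mod_cast hc
  linarith

lemma sq_sub_ne_zero {k : ℕ} (hk : 4 < k) :
    ((2 * Real.cos (2 * Real.pi / (k : ℝ)) : ℂ))^2
      - ((2 * Real.cos (Real.pi / (k : ℝ)) : ℂ))^2 ≠ 0 := by
  have h1 := cos2_pos_aux hk
  have h2 := cos_lt_aux hk
  have h3 : ((2 * Real.cos (2 * Real.pi / (k:ℝ)))^2 : ℝ)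
      ≠ ((2 * Real.cos (Real.pi / (k:ℝ)))^2 : ℝ) := by nlinarith
  intro hc
  exact h3 (by exact_mod_cast sub_eq_zero.mp hc)

/-- Transfer along an edge of `G'`. -/
lemma act_adj (hp₁ : p s₁' = s₁) (hp₂ : p s₂' = s₂) (hedge : G'.Adj s₁' s₂')
    (h12 : s₁ ≠ s₂) (hm4 : 4 < M s₁ s₂)
    (huniq : ∀ a b c : B', G'.Adj a b → G'.Adj a c → p b = p c → b = c)
    (hM3 : ∀ a b : B', G'.Adj a b → 3 ≤ M (p a) (p b))
    (hpadj : ∀ a b : B', G'.Adj a b → p a ≠ p b)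
    (a b : B') (hadj : G'.Adj a b) :
    ∃ c : ℂ, c ≠ 0 ∧ sec4Act M G' p s₁ s₂ s₁' s₂' (p b) (single a (1:ℂ))
      = single a 1 + c • single b 1 := by
  by_cases h2 : p b = s₁ ∧ a = s₂'
  · obtain ⟨hb1, rfl⟩ := h2
    have hb : b = s₁' := huniq a b s₁' hadj hedge.symm (by rw [hb1, hp₁])
    subst hb
    refine ⟨_, two_cos2_ne_zero hm4, ?_⟩
    rw [hb1]
    exact act_single_s₂' M G' p s₁ s₂ _ _ (by rw [hp₂]; exact fun hc => h12 hc.symm)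
  · by_cases h3 : p b = s₂ ∧ a = s₁'
    · obtain ⟨hb1, rfl⟩ := h3
      have hb : b = s₂' := huniq a b s₂' hadj hedge (by rw [hb1, hp₂])
      subst hb
      refine ⟨_, two_cos2_ne_zero hm4, ?_⟩
      rw [hb1]
      exact act_single_s₁' M G' p s₁ s₂ _ _ (by rw [hp₁]; exact h12)
        (fun hc => h12 hc.symm)
    · refine ⟨_, two_cos_ne_zero (hM3 b a hadj.symm), ?_⟩
      exact act_single_adj M G' p s₁ s₂ s₁' s₂' (p b) a b (hpadj a b hadj) h2 h3 hadj rfl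
        (fun c hc hpc => huniq a c b hc hadj hpc)

lemma coordV (hp₁ : p s₁' = s₁) (hp₂ : p s₂' = s₂) (s : B) (v : B' →₀ ℂ) (y : B')
    (hy : p y ≠ s) : (sec4Act M G' p s₁ s₂ s₁' s₂' s v) y = v y := by
  rw [eval_coord]
  have h2 : v y = v.sum fun x c => c * (LinearMap.id (R := ℂ) (single x (1:ℂ))) y := by
    rw [← eval_coord]; rfl
  rw [h2]
  exact Finsupp.sum_congr fun x _ => by
    rw [coord M G' p s₁ s₂ s₁' s₂' hp₁ hp₂ s x y hy]; rfl

lemma move (hp₁ : p s₁' = s₁) (hp₂ : p s₂' = s₂) (hedge : G'.Adj s₁' s₂')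
    (h12 : s₁ ≠ s₂) (hm4 : 4 < M s₁ s₂)
    (huniq : ∀ a b c : B', G'.Adj a b → G'.Adj a c → p b = p c → b = c)
    (hM3 : ∀ a b : B', G'.Adj a b → 3 ≤ M (p a) (p b))
    (hpadj : ∀ a b : B', G'.Adj a b → p a ≠ p b)
    (v : B' →₀ ℂ) (x₀ b₀ : B') (hadj : G'.Adj x₀ b₀)
    (hsup : ∀ x ∈ v.support, p x = p x₀) :
    ∃ c : ℂ, c ≠ 0 ∧ (sec4Act M G' p s₁ s₂ s₁' s₂' (p b₀) v - v) b₀ = c * v x₀ := by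
  obtain ⟨c, hc0, hc⟩ :=
    act_adj M G' p s₁ s₂ s₁' s₂' hp₁ hp₂ hedge h12 hm4 huniq hM3 hpadj x₀ b₀ hadj
  refine ⟨c, hc0, ?_⟩
  rw [Finsupp.sub_apply, eval_coord]
  have h2 : v b₀ = v.sum fun x cx => cx * (single x (1:ℂ)) b₀ := by
    have := eval_coord (B' := B') LinearMap.id v b₀
    simpa using this
  rw [h2, ← Finsupp.sum_sub, Finsupp.sum]
  rw [Finset.sum_eq_single x₀]
  · rw [hc]
    have hne : x₀ ≠ b₀ := hadj.ne
    simp [Finsupp.single_eq_of_ne' hne, mul_comm]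
  · intro x hx hxne
    have hpx : p x ≠ p b₀ := by
      rw [hsup x hx]; exact hpadj x₀ b₀ hadj
    have hnadj : ¬ G'.Adj x b₀ := by
      intro hc'
      exact hxne (huniq b₀ x x₀ hc'.symm hadj.symm ((hsup x hx).trans rfl))
    have hxb : x ≠ b₀ := fun hceq => hpx (hceq ▸ rfl)
    rw [coord_zero M G' p s₁ s₂ s₁' s₂' hp₁ hp₂ hedge x b₀ hpx hnadj,
      Finsupp.single_eq_of_ne' hxb]
    ring
  · intro hx₀
    rw [Finsupp.notMem_support_iff.mp hx₀]
    ring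

/-- The projection identity isolating the `s₁'`-coordinate. -/
lemma proj (hp₁ : p s₁' = s₁) (hp₂ : p s₂' = s₂) (hedge : G'.Adj s₁' s₂')
    (h12 : s₁ ≠ s₂) (hm4 : 4 < M s₁ s₂)
    (huniq : ∀ a b c : B', G'.Adj a b → G'.Adj a c → p b = p c → b = c)
    (hnbr : ∀ x : B', p x = s₁ → ∃ y, G'.Adj x y ∧ p y = s₂)
    (v : B' →₀ ℂ) (hsup : ∀ x ∈ v.support, p x = s₁) :
    sec4Act M G' p s₁ s₂ s₁' s₂' s₁ (sec4Act M G' p s₁ s₂ s₁' s₂' s₂ v - v)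
        - (sec4Act M G' p s₁ s₂ s₁' s₂' s₂ v - v)
        - ((2 * Real.cos (Real.pi / (M s₁ s₂ : ℝ)) : ℂ))^2 • v
      = (((2 * Real.cos (2 * Real.pi / (M s₁ s₂ : ℝ)) : ℂ))^2
          - ((2 * Real.cos (Real.pi / (M s₁ s₂ : ℝ)) : ℂ))^2) • ((v s₁') • single s₁' 1) := by
  set ν : ℂ := (2 * Real.cos (Real.pi / (M s₁ s₂ : ℝ)) : ℂ) with hν
  set μ : ℂ := (2 * Real.cos (2 * Real.pi / (M s₁ s₂ : ℝ)) : ℂ) with hμ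
  set Φ₁ := sec4Act M G' p s₁ s₂ s₁' s₂' s₁ with hΦ₁
  set Φ₂ := sec4Act M G' p s₁ s₂ s₁' s₂' s₂ with hΦ₂
  set L : (B' →₀ ℂ) →ₗ[ℂ] (B' →₀ ℂ) :=
    (Φ₁ - LinearMap.id) ∘ₗ (Φ₂ - LinearMap.id) - ν^2 • LinearMap.id with hL
  have hLv : ∀ w, L w = Φ₁ (Φ₂ w - w) - (Φ₂ w - w) - ν^2 • w := by
    intro w
    simp only [hL, LinearMap.sub_apply, LinearMap.comp_apply, LinearMap.smul_apply,
      LinearMap.id_apply, map_sub]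
    abel
  have hsingle1 : L (single s₁' (1:ℂ)) = (μ^2 - ν^2) • single s₁' 1 := by
    rw [hLv]
    have e2 : Φ₂ (single s₁' (1:ℂ)) = single s₁' 1 + μ • single s₂' 1 :=
      act_single_s₁' M G' p s₁ s₂ s₁' s₂' (by rw [hp₁]; exact h12) (fun hc => h12 hc.symm)
    have e1 : Φ₁ (single s₂' (1:ℂ)) = single s₂' 1 + μ • single s₁' 1 :=
      act_single_s₂' M G' p s₁ s₂ s₁' s₂' (by rw [hp₂]; exact fun hc => h12 hc.symm)
    rw [e2]
    have h5 : single s₁' (1:ℂ) + μ • single s₂' 1 - single s₁' 1 = μ • single s₂' 1 := by abel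
    rw [h5, map_smul, e1]
    rw [smul_add, smul_smul]
    module
  have hsingle0 : ∀ x : B', p x = s₁ → x ≠ s₁' → L (single x (1:ℂ)) = 0 := by
    intro x hx hxs
    rw [hLv]
    obtain ⟨y, hy1, hy2⟩ := hnbr x hx
    have hys : y ≠ s₂' := by
      intro hceq
      subst hceq
      exact hxs (huniq y x s₁' hy1.symm hedge.symm (by rw [hx, hp₁]))
    have e2 : Φ₂ (single x (1:ℂ)) = single x 1 + ν • single y 1 := by
      have := act_single_adj M G' p s₁ s₂ s₁' s₂' s₂ x y
        (by rw [hx]; exact h12) (fun hc => h12 hc.1.symm) (fun hc => hxs hc.2)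
        hy1 hy2 (fun c hc hpc => huniq x c y hc hy1 (hpc.trans hy2.symm))
      rw [hΦ₂, this, hx, hν]
      rw [M.symmetric s₂ s₁]
    have e1 : Φ₁ (single y (1:ℂ)) = single y 1 + ν • single x 1 := by
      have := act_single_adj M G' p s₁ s₂ s₁' s₂' s₁ y x
        (by rw [hy2]; exact fun hc => h12 hc.symm) (fun hc => hys hc.2)
        (fun hc => h12 hc.1) hy1.symm hx
        (fun c hc hpc => huniq y c x hc hy1.symm (hpc.trans hx.symm))
      rw [hΦ₁, this, hy2, hν]
    rw [e2]
    have h5 : single x (1:ℂ) + ν • single y 1 - single x 1 = ν • single y 1 := by abel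
    rw [h5, map_smul, e1]
    rw [smul_add, smul_smul]
    module
  -- now expand L v
  have hexp : L v = v.sum fun x c => c • L (single x 1) := eval_sum _ _
  rw [← hLv, hexp, Finsupp.sum]
  rw [Finset.sum_eq_single s₁']
  · by_cases hmem : s₁' ∈ v.support
    · rw [hsingle1, smul_smul, smul_smul, mul_comm]
    · rw [Finsupp.notMem_support_iff.mp hmem]
      simp
  · intro x hx hxne
    rw [hsingle0 x (hsup x hx) hxne, smul_zero]
  · intro hx
    rw [Finsupp.notMem_support_iff.mp hx]
    simp

lemma geo_step (hGconn : G'.Connected) (x z : B') (n : ℕ) (hd : G'.dist x z = n + 1) :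
    ∃ y, G'.Adj x y ∧ G'.dist y z = n := by
  obtain ⟨w, hw⟩ := SimpleGraph.exists_walk_of_dist_ne_zero (G := G') (u := x) (v := z)
    (by omega)
  cases w with
  | nil => rw [SimpleGraph.Walk.length_nil] at hw; omega
  | cons h q =>
    rename_i y
    rw [SimpleGraph.Walk.length_cons, hd] at hw
    have h1 : G'.dist y z ≤ n := by
      have := SimpleGraph.dist_le q
      omega
    have h2 : G'.dist x z ≤ G'.dist x y + G'.dist y z := hGconn.dist_triangle
    have h3 : G'.dist x y = 1 := SimpleGraph.dist_eq_one_iff_adj.mpr h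
    exact ⟨y, h, by omega⟩

end Aux

set_option maxHeartbeats 1000000 in
/-- under the Section 4 assumptions, with `ρ` the resulting representation of `W`
on `V = B' →₀ ℂ`, `V₀ = {v ∈ V : s·v = v for all s ∈ S}`, and with
`S₁′ = {a ∈ S′ : d(a,s₁′) < d(a,s₂′)}` infinite (distances in the tree `G′`): if
`m = m_{s₁s₂} > 4`, then the quotient representation `V̄ = V / V₀` of `W` is irreducible and
infinite dimensional.  Irreducibility of `V / V₀` is expressed equivalently via the lattice of
invariant subspaces: every `W`-invariant subspace `U` of `V` containing `V₀` equals `V₀` or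
`V`. -/
theorem statement8 {B B' W : Type*} [Group W] [Fintype B]
    (M : CoxeterMatrix B) (cs : CoxeterSystem M W)
    (hfin : ∀ s t : B, M s t ≠ 0)
    (hconn : (coxeterGraph M).Connected)
    (hnottree : ¬ (coxeterGraph M).IsTree)
    (s₁ s₂ : B) (hm : 4 ≤ M s₁ s₂)
    (G' : SimpleGraph B') (htree : G'.IsTree) (p : B' → B)
    (hmorph : ∀ a b : B', G'.Adj a b → (coxeterGraph M).Adj (p a) (p b))
    (hsurj : Function.Surjective p)
    (hcover : ∀ a : B', Set.BijOn p (G'.neighborSet a) ((coxeterGraph M).neighborSet (p a)))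
    (s₁' s₂' : B') (hedge : G'.Adj s₁' s₂') (hp₁ : p s₁' = s₁) (hp₂ : p s₂' = s₂)
    (ρ : Representation ℂ W (B' →₀ ℂ))
    (hρ : ∀ s : B, ρ (cs.simple s) = sec4Act M G' p s₁ s₂ s₁' s₂' s)
    (hinf : {a : B' | G'.dist a s₁' < G'.dist a s₂'}.Infinite)
    (hm4 : 4 < M s₁ s₂) :
    (¬ Module.Finite ℂ ((B' →₀ ℂ) ⧸ fixedSubmodule (sec4Act M G' p s₁ s₂ s₁' s₂'))) ∧
    ∀ U : Submodule ℂ (B' →₀ ℂ), (∀ w : W, ∀ v ∈ U, ρ w v ∈ U) →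
      fixedSubmodule (sec4Act M G' p s₁ s₂ s₁' s₂') ≤ U →
      U = fixedSubmodule (sec4Act M G' p s₁ s₂ s₁' s₂') ∨ U = ⊤ := by
  classical
  have h12 : s₁ ≠ s₂ := by
    intro h
    rw [h, M.diagonal] at hm
    omega
  have hpadj : ∀ a b : B', G'.Adj a b → p a ≠ p b := fun a b h => (hmorph a b h).1
  have hM3 : ∀ a b : B', G'.Adj a b → 3 ≤ M (p a) (p b) := by
    intro a b h
    have h2 := (hmorph a b h).2
    have h1 := M.off_diagonal _ _ (hmorph a b h).1
    have h0 := hfin (p a) (p b)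
    omega
  have huniq : ∀ a b c : B', G'.Adj a b → G'.Adj a c → p b = p c → b = c := by
    intro a b c h1 h2 h3
    exact (hcover a).injOn h1 h2 h3
  have hGconn := htree.isConnected
  have hnbr : ∀ (a : B') (t : B), (coxeterGraph M).Adj (p a) t → ∃ b, G'.Adj a b ∧ p b = t := by
    intro a t ht
    obtain ⟨b, hb, hpb⟩ := (hcover a).surjOn ht
    exact ⟨b, hb, hpb⟩
  have hadj12 : (coxeterGraph M).Adj s₁ s₂ := ⟨h12, by omega⟩
  have hUpart : ∀ U : Submodule ℂ (B' →₀ ℂ), (∀ w : W, ∀ v ∈ U, ρ w v ∈ U) →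
      fixedSubmodule (sec4Act M G' p s₁ s₂ s₁' s₂') ≤ U →
      U = fixedSubmodule (sec4Act M G' p s₁ s₂ s₁' s₂') ∨ U = ⊤ := by
    intro U hUinv hV0U
    by_cases hle : U ≤ fixedSubmodule (sec4Act M G' p s₁ s₂ s₁' s₂')
    · exact Or.inl (le_antisymm hle hV0U)
    right
    have hUact : ∀ (s : B) (w : B' →₀ ℂ), w ∈ U → sec4Act M G' p s₁ s₂ s₁' s₂' s w ∈ U := by
      intro s w hw
      have := hUinv (cs.simple s) w hw
      rwa [hρ s] at this
    obtain ⟨v, hvU, hvV₀⟩ := SetLike.not_le_iff_exists.mp hle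
    obtain ⟨s, hs⟩ : ∃ s, sec4Act M G' p s₁ s₂ s₁' s₂' s v ≠ v := by
      by_contra hc
      push_neg at hc
      exact hvV₀ hc
    have hwU : sec4Act M G' p s₁ s₂ s₁' s₂' s v - v ∈ U := sub_mem (hUact s v hvU) hvU
    have hwne : sec4Act M G' p s₁ s₂ s₁' s₂' s v - v ≠ 0 := sub_ne_zero.mpr hs
    have hwfib : ∀ x ∈ (sec4Act M G' p s₁ s₂ s₁' s₂' s v - v).support, p x = s := by
      intro x hx
      by_contra hpx
      rw [Finsupp.mem_support_iff, Finsupp.sub_apply,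
        coordV M G' p s₁ s₂ s₁' s₂' hp₁ hp₂ s v x hpx, sub_self] at hx
      exact hx rfl
    obtain ⟨x₀, hx₀⟩ := Finsupp.support_nonempty_iff.mpr hwne
    have hkey : ∀ n : ℕ, ∀ (u : B' →₀ ℂ) (y₀ : B'), u ∈ U → y₀ ∈ u.support →
        (∀ x ∈ u.support, p x = p y₀) → G'.dist y₀ s₁' = n →
        Finsupp.single s₁' (1:ℂ) ∈ U := by
      intro n
      induction n using Nat.strong_induction_on with
      | _ n ih =>
        intro u y₀ huU hy₀ hufib hdist
        cases n with
        | zero =>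
          have hy : y₀ = s₁' := hGconn.dist_eq_zero_iff.mp hdist
          rw [hy] at hy₀ hufib
          have hsup1 : ∀ x ∈ u.support, p x = s₁ := by
            intro x hx
            rw [hufib x hx, hp₁]
          have hproj := proj M G' p s₁ s₂ s₁' s₂' hp₁ hp₂ hedge h12 hm4 huniq
            (fun x hx => hnbr x s₂ (hx ▸ hadj12)) u hsup1
          have hmem : sec4Act M G' p s₁ s₂ s₁' s₂' s₁
                (sec4Act M G' p s₁ s₂ s₁' s₂' s₂ u - u)
              - (sec4Act M G' p s₁ s₂ s₁' s₂' s₂ u - u)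
              - ((2 * Real.cos (Real.pi / (M s₁ s₂ : ℝ)) : ℂ))^2 • u ∈ U := by
            have h2 : sec4Act M G' p s₁ s₂ s₁' s₂' s₂ u - u ∈ U :=
              sub_mem (hUact s₂ u huU) huU
            exact sub_mem (sub_mem (hUact s₁ _ h2) h2) (Submodule.smul_mem _ _ huU)
          rw [hproj, smul_smul] at hmem
          have hc0 : (((2 * Real.cos (2 * Real.pi / (M s₁ s₂ : ℝ)) : ℂ))^2
              - ((2 * Real.cos (Real.pi / (M s₁ s₂ : ℝ)) : ℂ))^2) * u s₁' ≠ 0 :=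
            mul_ne_zero (sq_sub_ne_zero hm4) (Finsupp.mem_support_iff.mp hy₀)
          have hmem2 := Submodule.smul_mem U
            ((((2 * Real.cos (2 * Real.pi / (M s₁ s₂ : ℝ)) : ℂ))^2
              - ((2 * Real.cos (Real.pi / (M s₁ s₂ : ℝ)) : ℂ))^2) * u s₁')⁻¹ hmem
          rwa [smul_smul, inv_mul_cancel₀ hc0, one_smul] at hmem2
        | succ k =>
          obtain ⟨b₀, hb₀adj, hb₀d⟩ := geo_step G' hGconn y₀ s₁' k hdist
          obtain ⟨c, hc0, hcoef⟩ := move M G' p s₁ s₂ s₁' s₂' hp₁ hp₂ hedge h12 hm4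
            huniq hM3 hpadj u y₀ b₀ hb₀adj hufib
          have hw'U : sec4Act M G' p s₁ s₂ s₁' s₂' (p b₀) u - u ∈ U :=
            sub_mem (hUact _ _ huU) huU
          have hb₀mem : b₀ ∈ (sec4Act M G' p s₁ s₂ s₁' s₂' (p b₀) u - u).support := by
            rw [Finsupp.mem_support_iff, hcoef]
            exact mul_ne_zero hc0 (Finsupp.mem_support_iff.mp hy₀)
          have hfib' : ∀ x ∈ (sec4Act M G' p s₁ s₂ s₁' s₂' (p b₀) u - u).support,
              p x = p b₀ := by
            intro x hx
            by_contra hpx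
            rw [Finsupp.mem_support_iff, Finsupp.sub_apply,
              coordV M G' p s₁ s₂ s₁' s₂' hp₁ hp₂ _ u x hpx, sub_self] at hx
            exact hx rfl
          exact ih k (Nat.lt_succ_self k) _ b₀ hw'U hb₀mem hfib' hb₀d
    have hs₁'U : Finsupp.single s₁' (1:ℂ) ∈ U := by
      refine hkey (G'.dist x₀ s₁') _ x₀ hwU hx₀ ?_ rfl
      intro x hx
      rw [hwfib x hx, hwfib x₀ hx₀]
    have hgen : ∀ (n : ℕ) (y : B'), G'.dist y s₁' = n → Finsupp.single y (1:ℂ) ∈ U := by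
      intro n
      induction n with
      | zero =>
        intro y hy
        have h5 := hGconn.dist_eq_zero_iff.mp hy
        subst h5
        exact hs₁'U
      | succ k ih =>
        intro y hy
        obtain ⟨y', hyadj, hyd⟩ := geo_step G' hGconn y s₁' k hy
        have h1 := ih y' hyd
        obtain ⟨c, hc0, hc⟩ := act_adj M G' p s₁ s₂ s₁' s₂' hp₁ hp₂ hedge h12 hm4
          huniq hM3 hpadj y' y hyadj.symm
        have hmem : c • Finsupp.single y (1:ℂ) ∈ U := by
          have h3 : c • Finsupp.single y (1:ℂ)
              = sec4Act M G' p s₁ s₂ s₁' s₂' (p y) (Finsupp.single y' 1)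
                - Finsupp.single y' 1 := by
            rw [hc]; abel
          rw [h3]
          exact sub_mem (hUact _ _ h1) h1
        have h6 := Submodule.smul_mem U c⁻¹ hmem
        rwa [smul_smul, inv_mul_cancel₀ hc0, one_smul] at h6
    rw [Submodule.eq_top_iff']
    intro f
    have h7 : f.sum (fun x c => Finsupp.single x c) ∈ U := by
      rw [Finsupp.sum]
      apply Submodule.sum_mem
      intro x hx
      have h4 : Finsupp.single x (f x) = f x • Finsupp.single x (1:ℂ) := by
        rw [Finsupp.smul_single, smul_eq_mul, mul_one]
      rw [h4]
      exact Submodule.smul_mem _ _ (hgen (G'.dist x s₁') x rfl)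
    rwa [Finsupp.sum_single] at h7
  refine ⟨?_, hUpart⟩
  intro hFin
  haveI := hFin
  have hDeg : ∀ a : B', ∃ b, G'.Adj a b := by
    intro a
    have h2 : ∃ t : B, t ≠ p a := by
      by_cases h : p a = s₁
      · exact ⟨s₂, by rw [h]; exact fun hc => h12 hc.symm⟩
      · exact ⟨s₁, fun hc => h hc.symm⟩
    obtain ⟨t, ht⟩ := h2
    obtain ⟨wlk⟩ := hconn.preconnected (p a) t
    cases wlk with
    | nil => exact absurd rfl ht
    | cons h q =>
      obtain ⟨b, hb, _⟩ := hnbr a _ h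
      exact ⟨b, hb⟩
  have hNfin : ∀ a : B', (G'.neighborSet a).Finite := by
    intro a
    apply Set.Finite.of_finite_image _ (hcover a).injOn
    rw [(hcover a).image_eq]
    exact Set.toFinite _
  have hEfin : ∀ a : B', {y : B' | G'.dist a y ≤ 2}.Finite := by
    intro a
    have hsub : {y : B' | G'.dist a y ≤ 2} ⊆
        insert a (G'.neighborSet a ∪ ⋃ b ∈ G'.neighborSet a, G'.neighborSet b) := by
      intro y hy
      simp only [Set.mem_setOf_eq] at hy
      have h3 : G'.dist a y = 0 ∨ G'.dist a y = 1 ∨ G'.dist a y = 2 := by omega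
      rcases h3 with h3 | h3 | h3
      · exact Set.mem_insert_iff.mpr (Or.inl (hGconn.dist_eq_zero_iff.mp h3).symm)
      · exact Set.mem_insert_iff.mpr (Or.inr (Set.mem_union_left _
          (SimpleGraph.dist_eq_one_iff_adj.mp h3)))
      · obtain ⟨w, hw⟩ := SimpleGraph.exists_walk_of_dist_ne_zero
          (G := G') (u := a) (v := y) (by omega)
        rw [h3] at hw
        cases w with
        | nil => simp at hw
        | cons h q =>
          rename_i z
          cases q with
          | nil => simp at hw
          | cons h' q' =>
            rename_i z'
            have h9 : q'.length = 0 := by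
              simp only [SimpleGraph.Walk.length_cons] at hw
              omega
            have h10 := SimpleGraph.Walk.eq_of_length_eq_zero h9
            exact Set.mem_insert_iff.mpr (Or.inr (Set.mem_union_right _
              (Set.mem_biUnion h (h10 ▸ h'))))
    exact Set.Finite.subset (((hNfin a).union (Set.Finite.biUnion (hNfin a)
      fun b _ => hNfin b)).insert a) hsub
  have hInfB' : Infinite B' := Set.infinite_univ_iff.mp (hinf.mono (Set.subset_univ _))
  have hSep : ∀ n : ℕ, ∃ F : Finset B', F.card = n ∧
      ∀ a ∈ F, ∀ b ∈ F, a ≠ b → 2 < G'.dist a b := by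
    intro n
    induction n with
    | zero => exact ⟨∅, rfl, by simp⟩
    | succ k ih =>
      obtain ⟨F, hc, hsep⟩ := ih
      have hXfin : (⋃ a ∈ (F : Set B'), {y : B' | G'.dist a y ≤ 2}).Finite :=
        Set.Finite.biUnion F.finite_toSet fun a _ => hEfin a
      obtain ⟨y, hy⟩ := hXfin.infinite_compl.nonempty
      have hyF : y ∉ F := by
        intro hc'
        exact hy (Set.mem_biUnion (Finset.mem_coe.mpr hc')
          (by simp [SimpleGraph.dist_self]))
      have hyd : ∀ c ∈ F, 2 < G'.dist y c := by
        intro c hcF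
        have h5 : ¬ (G'.dist c y ≤ 2) := fun hc2 =>
          hy (Set.mem_biUnion (Finset.mem_coe.mpr hcF) hc2)
        rw [SimpleGraph.dist_comm] at h5
        omega
      refine ⟨insert y F, by rw [Finset.card_insert_of_notMem hyF, hc], ?_⟩
      intro a ha b hb hab
      simp only [Finset.mem_insert] at ha hb
      rcases ha with rfl | ha
      · rcases hb with rfl | hb
        · exact absurd rfl hab
        · exact hyd b hb
      · rcases hb with rfl | hb
        · rw [SimpleGraph.dist_comm]
          exact hyd a ha
        · exact hsep a ha b hb hab
  have hVan : ∀ (F : Finset B'), (∀ a ∈ F, ∀ b ∈ F, a ≠ b → 2 < G'.dist a b) →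
      ∀ v : B' →₀ ℂ, (∀ x ∈ v.support, x ∈ F) →
      (∀ s, sec4Act M G' p s₁ s₂ s₁' s₂' s v = v) → v = 0 := by
    intro F hFsep v hsupp hfix
    ext a
    rw [Finsupp.coe_zero, Pi.zero_apply]
    by_cases haS : a ∈ v.support
    swap
    · exact Finsupp.notMem_support_iff.mp haS
    have haF : a ∈ F := hsupp a haS
    obtain ⟨b, hb⟩ := hDeg a
    have hbF : b ∉ F := by
      intro hbF
      have h8 := hFsep a haF b hbF hb.ne
      have h9 : G'.dist a b = 1 := SimpleGraph.dist_eq_one_iff_adj.mpr hb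
      omega
    have hvb : v b = 0 := Finsupp.notMem_support_iff.mp (fun hc => hbF (hsupp b hc))
    obtain ⟨cc, hcc0, hcc⟩ := act_adj M G' p s₁ s₂ s₁' s₂' hp₁ hp₂ hedge h12 hm4
      huniq hM3 hpadj a b hb
    have hfixb : (sec4Act M G' p s₁ s₂ s₁' s₂' (p b) v) b = v b := by rw [hfix (p b)]
    rw [eval_coord, Finsupp.sum] at hfixb
    rw [Finset.sum_eq_single a] at hfixb
    · rw [hcc, hvb, Finsupp.add_apply, Finsupp.smul_apply,
        Finsupp.single_eq_of_ne' hb.ne, Finsupp.single_eq_same] at hfixb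
      have h11 : v a * cc = 0 := by
        rw [← hfixb]
        simp [smul_eq_mul]
      rcases mul_eq_zero.mp h11 with h | h
      · exact h
      · exact absurd h hcc0
    · intro x hx hxa
      have hxF : x ∈ F := hsupp x hx
      have hxb : ¬ G'.Adj x b := by
        intro hadj'
        have t1 : G'.dist x b = 1 := SimpleGraph.dist_eq_one_iff_adj.mpr hadj'
        have t2 : G'.dist b a = 1 := SimpleGraph.dist_eq_one_iff_adj.mpr hb.symm
        have t3 : G'.dist x a ≤ G'.dist x b + G'.dist b a := hGconn.dist_triangle
        have t4 := hFsep x hxF a haF hxa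
        omega
      by_cases hpx : p x = p b
      · have hxbne : x ≠ b := fun hceq => hbF (hceq ▸ hxF)
        rw [act_single_of_fiber M G' p s₁ s₂ s₁' s₂' (p b) x hpx, Finsupp.neg_apply,
          Finsupp.single_eq_of_ne' hxbne, neg_zero, mul_zero]
      · rw [coord_zero M G' p s₁ s₂ s₁' s₂' hp₁ hp₂ hedge x b hpx hxb, mul_zero]
    · intro hna
      exact absurd haS hna
  obtain ⟨F, hFcard, hFsep⟩ := hSep (Module.finrank ℂ
    ((B' →₀ ℂ) ⧸ fixedSubmodule (sec4Act M G' p s₁ s₂ s₁' s₂')) + 1)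
  have hLI : LinearIndependent ℂ (fun a : {x // x ∈ F} =>
      Submodule.Quotient.mk (p := fixedSubmodule (sec4Act M G' p s₁ s₂ s₁' s₂'))
        (Finsupp.single (a : B') (1:ℂ))) := by
    rw [linearIndependent_iff']
    intro t g hsum i hit
    have hmk : (fixedSubmodule (sec4Act M G' p s₁ s₂ s₁' s₂')).mkQ
        (∑ j ∈ t, g j • Finsupp.single (j : B') (1:ℂ)) = 0 := by
      rw [map_sum]
      simp only [map_smul, Submodule.mkQ_apply]
      exact hsum
    have hv0 : (∑ j ∈ t, g j • Finsupp.single (j : B') (1:ℂ))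
        ∈ fixedSubmodule (sec4Act M G' p s₁ s₂ s₁' s₂') := by
      rw [Submodule.mkQ_apply] at hmk
      exact (Submodule.Quotient.mk_eq_zero _).mp hmk
    have hsupp : ∀ x ∈ (∑ j ∈ t, g j • Finsupp.single (j : B') (1:ℂ)).support, x ∈ F := by
      intro x hx
      have h8 := Finsupp.support_finset_sum hx
      rw [Finset.mem_biUnion] at h8
      obtain ⟨j, hj, hxj⟩ := h8
      have h9 := Finsupp.support_smul hxj
      rw [Finsupp.support_single_ne_zero _ (one_ne_zero)] at h9
      rw [Finset.mem_singleton] at h9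
      rw [h9]
      exact j.2
    have hveq : (∑ j ∈ t, g j • Finsupp.single (j : B') (1:ℂ)) = 0 :=
      hVan F hFsep _ hsupp hv0
    have h9 : (∑ j ∈ t, g j • Finsupp.single (j : B') (1:ℂ)) (i : B') = g i := by
      rw [Finsupp.finset_sum_apply]
      rw [Finset.sum_eq_single i]
      · rw [Finsupp.smul_apply, Finsupp.single_eq_same, smul_eq_mul, mul_one]
      · intro j hj hji
        have hne : (j : B') ≠ (i : B') := fun hceq => hji (Subtype.ext hceq)
        rw [Finsupp.smul_apply, Finsupp.single_eq_of_ne' hne, smul_zero]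
      · intro hni
        exact absurd hit hni
    rw [hveq] at h9
    simpa using h9.symm
  have hcard := hLI.fintype_card_le_finrank
  rw [Fintype.card_coe, hFcard] at hcard
  omega
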